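/- arXiv:2603.15718 — 2 statements merged into one kernel-verified Lean document; each statement's English description precedes it below -/
import Mathlib

section
/- For every s ≥ 0 and n ≥ 0, the coefficient polynomials U_n^{(s)} defined by (1 − 2tx + t²)^{−(s+1)} = Σ_n U_n^{(s)}(x) tⁿ satisfy U_{2n+1}^{(s)}(x) = Σ_k (−1)^{n−k} C(n+k+s+1, 2k+s+1) C(2k+s+1, s) 2^{2k+1} x^{2k+1}, summed over 0 ≤ k ≤ n. -/
open Polynomial PowerSeries Finset

noncomputable def chebT (s m j : ℕ) : ℚ[X] :=
  if 2 * j ≤ m then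
    (-1 : ℚ[X]) ^ j * ((m - j + s).choose j : ℚ[X]) * ((m - 2 * j + s).choose s : ℚ[X]) *
      2 ^ (m - 2 * j) * Polynomial.X ^ (m - 2 * j)
  else 0

noncomputable def chebV (s m : ℕ) : ℚ[X] := ∑ j ∈ range (m + 1), chebT s m j

lemma chebT_zero {σ m j : ℕ} (h : m < 2 * j) : chebT σ m j = 0 := if_neg (by omega)

lemma chebV_zero (σ : ℕ) : chebV σ 0 = 1 := by
  simp [chebV, chebT]

lemma chebV_one (σ : ℕ) : chebV σ 1 = ((σ + 1 : ℕ) : ℚ[X]) * (2 * Polynomial.X) := by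
  rw [chebV]
  rw [Finset.sum_range_succ, chebT_zero (by omega), add_zero, Finset.sum_range_one]
  rw [chebT, if_pos (by omega)]
  norm_num
  rw [show 1 + σ = σ + 1 by omega, Nat.choose_succ_self_right]
  push_cast
  ring

lemma ptS (s M j : ℕ) :
    chebT (s+1) (M+2) j - 2 * Polynomial.X * chebT (s+1) (M+1) j
      + (if j = 0 then 0 else chebT (s+1) M (j-1)) = chebT s (M+2) j := by
  rcases j with _ | i
  · simp only [chebT, if_pos (show 2*0 ≤ M+2 by omega), if_pos (show 2*0 ≤ M+1 by omega),
      if_pos rfl]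
    norm_num
    have e1 : M + 2 + (s+1) = (M + s + 2) + 1 := by omega
    have e2 : M + 1 + (s+1) = M + s + 2 := by omega
    have e3 : M + 2 + s = M + s + 2 := by omega
    rw [e1, e2, e3, Nat.choose_succ_succ]
    push_cast
    ring
  · by_cases h1 : 2*(i+1) ≤ M+1
    · obtain ⟨a, rfl⟩ : ∃ a, M = 2*i+1+a := ⟨M - (2*i+1), by omega⟩
      simp only [chebT, if_pos (show 2*(i+1) ≤ 2*i+1+a+2 by omega),
        if_pos (show 2*(i+1) ≤ 2*i+1+a+1 by omega), if_neg (Nat.succ_ne_zero i),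
        Nat.add_sub_cancel, if_pos (show 2*i ≤ 2*i+1+a by omega)]
      have e1 : 2*i+1+a+2 - (i+1) + (s+1) = (a+i+s+2)+1 := by omega
      have e2 : 2*i+1+a+2 - 2*(i+1) + (s+1) = (a+s+1)+1 := by omega
      have e3 : 2*i+1+a+2 - 2*(i+1) = a+1 := by omega
      have e4 : 2*i+1+a+1 - (i+1) + (s+1) = a+i+s+2 := by omega
      have e5 : 2*i+1+a+1 - 2*(i+1) + (s+1) = a+s+1 := by omega
      have e6 : 2*i+1+a+1 - 2*(i+1) = a := by omega
      have e7 : 2*i+1+a - i + (s+1) = a+i+s+2 := by omega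
      have e8 : 2*i+1+a - 2*i + (s+1) = (a+s+1)+1 := by omega
      have e9 : 2*i+1+a - 2*i = a+1 := by omega
      have e10 : 2*i+1+a+2 - (i+1) + s = a+i+s+2 := by omega
      have e11 : 2*i+1+a+2 - 2*(i+1) + s = a+s+1 := by omega
      rw [e10, e11, e1, e2, e3, e4, e5, e6, e7, e8, e9,
        Nat.choose_succ_succ (a+i+s+2) i, Nat.choose_succ_succ (a+s+1) s]
      push_cast
      ring
    · by_cases h2 : 2*(i+1) ≤ M+2
      · obtain rfl : M = 2*i := by omega
        simp only [chebT, if_pos (show 2*(i+1) ≤ 2*i+2 by omega), if_neg h1,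
          if_neg (Nat.succ_ne_zero i), Nat.add_sub_cancel, if_pos (show 2*i ≤ 2*i by omega)]
        have e1 : 2*i+2 - (i+1) + (s+1) = (i+s+1)+1 := by omega
        have e2 : 2*i+2 - 2*(i+1) + (s+1) = s+1 := by omega
        have e3 : 2*i+2 - 2*(i+1) = 0 := by omega
        have e4 : 2*i - i + (s+1) = i+s+1 := by omega
        have e5 : 2*i - 2*i + (s+1) = s+1 := by omega
        have e6 : 2*i - 2*i = 0 := by omega
        have e7 : 2*i+2 - (i+1) + s = i+s+1 := by omega
        have e8 : 2*i+2 - 2*(i+1) + s = s := by omega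
        rw [e7, e8, e1, e2, e3, e4, e5, e6, Nat.choose_succ_succ (i+s+1) i,
          Nat.choose_self, Nat.choose_self]
        push_cast
        ring
      · rw [chebT_zero (by omega), chebT_zero (by omega), chebT_zero (by omega),
          chebT_zero (by omega), if_neg (Nat.succ_ne_zero i)]
        ring

lemma pt0 (M j : ℕ) :
    chebT 0 (M+2) j - 2 * Polynomial.X * chebT 0 (M+1) j
      + (if j = 0 then 0 else chebT 0 M (j-1)) = 0 := by
  rcases j with _ | i
  · simp only [chebT, if_pos (show 2*0 ≤ M+2 by omega), if_pos (show 2*0 ≤ M+1 by omega),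
      if_pos rfl]
    norm_num
    ring
  · by_cases h1 : 2*(i+1) ≤ M+1
    · obtain ⟨a, rfl⟩ : ∃ a, M = 2*i+1+a := ⟨M - (2*i+1), by omega⟩
      simp only [chebT, if_pos (show 2*(i+1) ≤ 2*i+1+a+2 by omega),
        if_pos (show 2*(i+1) ≤ 2*i+1+a+1 by omega), if_neg (Nat.succ_ne_zero i),
        Nat.add_sub_cancel, if_pos (show 2*i ≤ 2*i+1+a by omega)]
      have e1 : 2*i+1+a+2 - (i+1) + 0 = (a+i+1)+1 := by omega
      have e2 : 2*i+1+a+2 - 2*(i+1) + 0 = a+1 := by omega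
      have e3 : 2*i+1+a+2 - 2*(i+1) = a+1 := by omega
      have e4 : 2*i+1+a+1 - (i+1) + 0 = a+i+1 := by omega
      have e5 : 2*i+1+a+1 - 2*(i+1) + 0 = a := by omega
      have e6 : 2*i+1+a+1 - 2*(i+1) = a := by omega
      have e7 : 2*i+1+a - i + 0 = a+i+1 := by omega
      have e8 : 2*i+1+a - 2*i + 0 = a+1 := by omega
      have e9 : 2*i+1+a - 2*i = a+1 := by omega
      rw [e1, e2, e3, e4, e5, e6, e7, e8, e9, Nat.choose_succ_succ (a+i+1) i]
      simp only [Nat.choose_zero_right]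
      push_cast
      ring
    · by_cases h2 : 2*(i+1) ≤ M+2
      · obtain rfl : M = 2*i := by omega
        simp only [chebT, if_pos (show 2*(i+1) ≤ 2*i+2 by omega), if_neg h1,
          if_neg (Nat.succ_ne_zero i), Nat.add_sub_cancel, if_pos (show 2*i ≤ 2*i by omega)]
        have e1 : 2*i+2 - (i+1) + 0 = i+1 := by omega
        have e2 : 2*i+2 - 2*(i+1) + 0 = 0 := by omega
        have e3 : 2*i+2 - 2*(i+1) = 0 := by omega
        have e4 : 2*i - i + 0 = i := by omega
        have e5 : 2*i - 2*i + 0 = 0 := by omega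
        have e6 : 2*i - 2*i = 0 := by omega
        rw [e1, e2, e3, e4, e5, e6, Nat.choose_self, Nat.choose_self]
        norm_num
        ring
      · rw [chebT_zero (by omega), chebT_zero (by omega), chebT_zero (by omega),
          if_neg (Nat.succ_ne_zero i)]
        ring

lemma chebV_rec (σ M : ℕ) :
    chebV σ (M+2) - 2 * Polynomial.X * chebV σ (M+1) + chebV σ M
      = ∑ j ∈ range (M+2+1),
          (chebT σ (M+2) j - 2 * Polynomial.X * chebT σ (M+1) j
            + (if j = 0 then 0 else chebT σ M (j-1))) := by
  have hV2 : chebV σ (M+2) = ∑ j ∈ range (M+2+1), chebT σ (M+2) j := rfl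
  have hV1 : chebV σ (M+1) = ∑ j ∈ range (M+2+1), chebT σ (M+1) j := by
    rw [Finset.sum_range_succ, chebT_zero (by omega), add_zero]
    rfl
  have hV0 : chebV σ M = ∑ j ∈ range (M+2+1),
      (if j = 0 then (0:ℚ[X]) else chebT σ M (j-1)) := by
    rw [Finset.sum_range_succ' (fun j => if j = 0 then (0:ℚ[X]) else chebT σ M (j-1)) (M+2)]
    simp only [Nat.succ_ne_zero, if_neg, Nat.add_sub_cancel, if_pos rfl, add_zero,
      reduceIte]
    rw [Finset.sum_range_succ, chebT_zero (by omega), add_zero]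
    rfl
  rw [hV2, hV1, hV0, Finset.mul_sum, ← Finset.sum_sub_distrib, ← Finset.sum_add_distrib]

lemma keyS (s M : ℕ) :
    chebV (s+1) (M+2) - 2 * Polynomial.X * chebV (s+1) (M+1) + chebV (s+1) M
      = chebV s (M+2) := by
  rw [chebV_rec, chebV]
  exact Finset.sum_congr rfl fun j _ => ptS s M j

lemma key0 (M : ℕ) :
    chebV 0 (M+2) - 2 * Polynomial.X * chebV 0 (M+1) + chebV 0 M = 0 := by
  rw [chebV_rec]
  exact Finset.sum_eq_zero fun j _ => pt0 M j

noncomputable def Aps : PowerSeries ℚ[X] :=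
  (1 : PowerSeries ℚ[X]) - 2 * PowerSeries.C Polynomial.X * PowerSeries.X +
    PowerSeries.X ^ 2

lemma coeff_Aps_mul (f : PowerSeries ℚ[X]) (m : ℕ) :
    PowerSeries.coeff m (Aps * f)
      = PowerSeries.coeff m f
        - 2 * Polynomial.X * (if 1 ≤ m then PowerSeries.coeff (m-1) f else 0)
        + (if 2 ≤ m then PowerSeries.coeff (m-2) f else 0) := by
  have hC : PowerSeries.C (2 * (Polynomial.X : ℚ[X]))
      = 2 * PowerSeries.C (Polynomial.X : ℚ[X]) := by
    rw [map_mul, map_ofNat]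
  have h : Aps * f = f - PowerSeries.C (2 * Polynomial.X) * (f * PowerSeries.X ^ 1)
      + f * PowerSeries.X ^ 2 := by
    rw [hC, Aps]; ring
  rw [h, map_add, map_sub, PowerSeries.coeff_C_mul, PowerSeries.coeff_mul_X_pow',
    PowerSeries.coeff_mul_X_pow']
  try ring

lemma mulW0 : Aps * PowerSeries.mk (chebV 0) = 1 := by
  refine PowerSeries.ext fun m => ?_
  rw [coeff_Aps_mul, PowerSeries.coeff_mk, PowerSeries.coeff_one]
  rcases m with _ | _ | M
  · simp [chebV_zero]
  · norm_num
    rw [chebV_one, chebV_zero]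
    push_cast
    try ring
  · have h1 : 1 ≤ M + 1 + 1 := by omega
    have h2 : 2 ≤ M + 1 + 1 := by omega
    rw [if_pos h1, if_pos h2, if_neg (by omega)]
    simp only [PowerSeries.coeff_mk]
    have e1 : M + 1 + 1 - 1 = M + 1 := by omega
    have e2 : M + 1 + 1 - 2 = M := by omega
    rw [e1, e2]
    exact key0 M

lemma mulWS (s : ℕ) :
    Aps * PowerSeries.mk (chebV (s+1)) = PowerSeries.mk (chebV s) := by
  refine PowerSeries.ext fun m => ?_
  rw [coeff_Aps_mul, PowerSeries.coeff_mk, PowerSeries.coeff_mk]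
  rcases m with _ | _ | M
  · simp [chebV_zero]
  · norm_num
    try simp only [PowerSeries.coeff_mk]
    rw [chebV_one, chebV_one, chebV_zero]
    push_cast
    ring
  · have h1 : 1 ≤ M + 1 + 1 := by omega
    have h2 : 2 ≤ M + 1 + 1 := by omega
    rw [if_pos h1, if_pos h2]
    simp only [PowerSeries.coeff_mk]
    have e1 : M + 1 + 1 - 1 = M + 1 := by omega
    have e2 : M + 1 + 1 - 2 = M := by omega
    rw [e1, e2]
    exact keyS s M

lemma powV : ∀ s : ℕ, Aps ^ (s+1) * PowerSeries.mk (chebV s) = 1 := by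
  intro s
  induction s with
  | zero => simpa using mulW0
  | succ s ih =>
    have : Aps ^ (s+1+1) * PowerSeries.mk (chebV (s+1))
        = Aps ^ (s+1) * (Aps * PowerSeries.mk (chebV (s+1))) := by ring
    rw [this, mulWS, ih]

theorem generalized_chebyshev_odd_explicit
    (U : ℕ → ℕ → ℚ[X])
    (hU : ∀ s : ℕ,
      ((1 : PowerSeries ℚ[X]) - 2 * PowerSeries.C (Polynomial.X : ℚ[X]) * PowerSeries.X +
          PowerSeries.X ^ 2) ^ (s + 1) * PowerSeries.mk (fun n => U s n) = 1)
    (s n : ℕ) :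
    U s (2 * n + 1) =
      ∑ k ∈ range (n + 1),
        (-1 : ℚ[X]) ^ (n - k) * ((n + k + s + 1).choose (2 * k + s + 1) : ℚ[X]) *
          ((2 * k + s + 1).choose s : ℚ[X]) * 2 ^ (2 * k + 1) * Polynomial.X ^ (2 * k + 1) := by
  have hApsne : Aps ≠ 0 := by
    intro h
    have h0 := congrArg (PowerSeries.constantCoeff) h
    simp [Aps] at h0
  have hU' : Aps ^ (s+1) * PowerSeries.mk (fun n => U s n) = 1 := hU s
  have hmk : PowerSeries.mk (fun n => U s n) = PowerSeries.mk (chebV s) :=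
    mul_left_cancel₀ (pow_ne_zero (s+1) hApsne) (hU'.trans (powV s).symm)
  have hc : U s (2*n+1) = chebV s (2*n+1) := by
    have := congrArg (PowerSeries.coeff (2*n+1)) hmk
    simpa using this
  rw [hc]
  have hsub : chebV s (2*n+1) = ∑ j ∈ range (n+1), chebT s (2*n+1) j := by
    rw [chebV]
    exact (Finset.sum_subset
      (Finset.range_subset_range.mpr (by omega))
      (fun x _ hx => chebT_zero (by simp only [Finset.mem_range] at hx ⊢; omega))).symm
  rw [hsub]
  rw [← Finset.sum_range_reflect
    (fun k => (-1 : ℚ[X]) ^ (n - k) * ((n + k + s + 1).choose (2 * k + s + 1) : ℚ[X]) *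
      ((2 * k + s + 1).choose s : ℚ[X]) * 2 ^ (2 * k + 1) * Polynomial.X ^ (2 * k + 1)) (n+1)]
  refine Finset.sum_congr rfl fun j hj => ?_
  rw [Finset.mem_range] at hj
  obtain ⟨a, rfl⟩ : ∃ a, n = j + a := ⟨n - j, by omega⟩
  rw [chebT, if_pos (by omega : 2*j ≤ 2*(j+a)+1)]
  have e0 : j + a + 1 - 1 - j = a := by omega
  have e1 : 2*(j+a)+1 - j + s = j + (2*a+s+1) := by omega
  have e2 : 2*(j+a)+1 - 2*j = 2*a+1 := by omega
  have e3 : j + a - a = j := by omega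
  have e4 : j + a + a + s + 1 = j + (2*a+s+1) := by omega
  have e5 : 2*a + s + 1 = 2*a+s+1 := rfl
  simp only [e0, e1, e2, e3, e4]
  have hsym : (j + (2*a+s+1)).choose (2*a+s+1) = (j + (2*a+s+1)).choose j := by
    have := Nat.choose_symm (show j ≤ j + (2*a+s+1) by omega)
    rwa [Nat.add_sub_cancel_left] at this
  have e6 : 2*a+1 = 2*a + 1 := rfl
  rw [hsym]
  ring_nf
end

section
/- For any positive integer d and any integer h with 0 ≤ h ≤ d, the identity (1 − L_d z + (−1)^d z²) · Σ_{n≥0} F_{nd+h} zⁿ = F_h + (−1)^h F_{d−h} z holds in the ring of formal power series ℤ[[z]]. -/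
open PowerSeries

def lucas : ℕ → ℕ
  | 0 => 2
  | 1 => 1
  | n + 2 => lucas n + lucas (n + 1)

lemma lucas_eq_fib (n : ℕ) : lucas (n + 1) = Nat.fib n + Nat.fib (n + 2) := by
  induction n using Nat.twoStepInduction with
  | zero => rfl
  | one => rfl
  | more n ih1 ih2 =>
    show lucas (n+1) + lucas (n+2) = _
    have a1 := Nat.fib_add_two (n := n)
    have a2 := Nat.fib_add_two (n := n + 1)
    have a3 := Nat.fib_add_two (n := n + 2)
    rw [ih1, ih2]
    simp only [show n+1+2 = n+3 from rfl, show n+2+2 = n+4 from rfl,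
      show n+1+1 = n+2 from rfl, show n+2+1 = n+3 from rfl] at a1 a2 a3 ⊢
    omega

/-- d'Ocagne style subtraction identity over ℤ -/
lemma fib_sub (h k : ℕ) :
    (Nat.fib (h + k) : ℤ) * Nat.fib (h + 1) - Nat.fib (h + k + 1) * Nat.fib h
      = (-1) ^ h * Nat.fib k := by
  induction h with
  | zero => simp
  | succ h ih =>
    rw [show h + 1 + 1 = h + 2 from rfl, Nat.fib_add_two,
      show h + 1 + k + 1 = (h + k) + 2 by ring, Nat.fib_add_two,
      show h + 1 + k = h + k + 1 by ring]
    push_cast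
    linear_combination -ih

theorem fib_d_section_generating_function (d h : ℕ) (hd : 1 ≤ d) (hh : h ≤ d) :
    ((1 : PowerSeries ℤ) - (lucas d : PowerSeries ℤ) * PowerSeries.X +
        (-1 : PowerSeries ℤ) ^ d * PowerSeries.X ^ 2) *
      PowerSeries.mk (fun n => (Nat.fib (n * d + h) : ℤ)) =
    (Nat.fib h : PowerSeries ℤ) + (-1 : PowerSeries ℤ) ^ h * (Nat.fib (d - h) : PowerSeries ℤ) *
      PowerSeries.X := by
  obtain ⟨e, rfl⟩ : ∃ e, d = e + 1 := ⟨d - 1, by omega⟩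
  set d := e + 1 with hdef
  -- lucas over ℤ
  have hluc : (lucas d : ℤ) = Nat.fib e + Nat.fib (e + 2) := by
    rw [lucas_eq_fib]; push_cast; ring
  -- addition formula over ℤ
  have hadd : ∀ m : ℕ, (Nat.fib (m + d) : ℤ) =
      Nat.fib m * Nat.fib e + Nat.fib (m + 1) * Nat.fib (e + 1) := by
    intro m
    have : m + d = m + e + 1 := by omega
    rw [this, Nat.fib_add]; push_cast; ring
  -- the key recurrence: fib(m+2d) = lucas d * fib(m+d) - (-1)^d * fib m
  have hkey : ∀ m : ℕ, (Nat.fib (m + 2 * d) : ℤ) =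
      lucas d * Nat.fib (m + d) - (-1) ^ d * Nat.fib m := by
    intro m
    have h1 : (Nat.fib (m + 2 * d) : ℤ) =
        Nat.fib (m + d) * Nat.fib e + Nat.fib (m + d + 1) * Nat.fib (e + 1) := by
      have : m + 2 * d = (m + d) + e + 1 := by omega
      rw [this, Nat.fib_add]; push_cast; ring
    have h2 := fib_sub d m
    have h3 : (Nat.fib (d + 1) : ℤ) = Nat.fib e + Nat.fib (e + 1) := by
      have : d + 1 = e + 2 := rfl
      rw [this, Nat.fib_add_two]; push_cast; ring
    have h4 : d + m = m + d := by ring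
    rw [h4] at h2
    have h5 : (Nat.fib (e + 2) : ℤ) = Nat.fib e + Nat.fib (e + 1) := by
      rw [Nat.fib_add_two]; push_cast; ring
    rw [h1, hluc, h5]
    rw [h3] at h2
    linarith [h2]
  -- n = 1 coefficient identity
  have hone : (Nat.fib (d + h) : ℤ) - lucas d * Nat.fib h = (-1) ^ h * Nat.fib (d - h) := by
    have h2 := fib_sub h (d - h)
    have e1 : h + (d - h) = d := by omega
    rw [e1] at h2
    have h5 : (Nat.fib (e + 2) : ℤ) = Nat.fib e + Nat.fib (e + 1) := by
      rw [Nat.fib_add_two]; push_cast; ring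
    have ha := hadd h
    have h4 : h + d = d + h := by ring
    rw [h4] at ha
    rw [ha, hluc, h5]
    have h6 : d + 1 = e + 2 := rfl
    rw [h6, h5] at h2
    linarith [h2]
  ext n
  rw [add_mul, sub_mul, one_mul, mul_assoc, mul_assoc, map_add, map_sub]
  have hLC : (lucas d : PowerSeries ℤ) = C (R := ℤ) (lucas d) := by
    simp [PowerSeries.C_eq_algebraMap]
  have hsgn : ((-1 : PowerSeries ℤ) ^ d) = C (R := ℤ) ((-1) ^ d) := by
    simp
  rw [hLC, hsgn, coeff_C_mul, coeff_C_mul]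
  have h1C : ∀ m : ℕ, (m : PowerSeries ℤ) = C (R := ℤ) (m : ℤ) := fun m => rfl
  have h3C : ∀ k : ℕ, (-1 : PowerSeries ℤ) ^ k = C (R := ℤ) ((-1) ^ k) := by intro k; simp
  match n with
  | 0 =>
    simp [coeff_mk, coeff_zero_eq_constantCoeff]
  | 1 =>
    rw [coeff_succ_X_mul, coeff_mk, coeff_mk,
      show 0 * d + h = h by ring, show 1 * d + h = d + h by ring]
    have hx2 : (coeff 1) (X ^ 2 * mk fun n => (Nat.fib (n * d + h) : ℤ)) = 0 := by
      rw [coeff_X_pow_mul']; simp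
    have hr : (coeff (R := ℤ) 1) ((Nat.fib h : PowerSeries ℤ) +
        (-1) ^ h * (Nat.fib (d - h) : PowerSeries ℤ) * X) = (-1) ^ h * Nat.fib (d - h) := by
      rw [h1C, h1C, h3C, ← map_mul, map_add, coeff_C, coeff_C_mul, coeff_X]
      simp
    rw [hx2, hr]
    linarith [hone]
  | (n + 2) =>
    rw [coeff_succ_X_mul, coeff_mk, coeff_mk]
    have hx2 : (coeff (R := ℤ) (n + 2)) (X ^ 2 * mk fun n => (Nat.fib (n * d + h) : ℤ)) =
        Nat.fib (n * d + h) := by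
      rw [coeff_X_pow_mul, coeff_mk]
    have hrhs : (coeff (R := ℤ) (n + 2)) ((Nat.fib h : PowerSeries ℤ) +
        (-1) ^ h * (Nat.fib (d - h) : PowerSeries ℤ) * X) = 0 := by
      rw [h1C, h1C, h3C, ← map_mul, map_add, coeff_C, coeff_C_mul, coeff_X]
      simp
    rw [hx2, hrhs]
    have := hkey (n * d + h)
    have harith : n * d + h + 2 * d = (n + 2) * d + h := by ring
    have harith2 : n * d + h + d = (n + 1) * d + h := by ring
    rw [harith, harith2] at this
    linarith [this]
end
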